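/- Let G be a finite connected simple graph such that for every pair of edges e, f of G, the graph obtained from G by deleting e and f is still connected (i.e., G is 3-edge-connected). Then there exist three spanning trees T_1, T_2, T_3 of G such that the union of their complements covers all edges of G; equivalently, the edge sets of T_1, T_2 and T_3 have empty intersection: E(T_1) ∩ E(T_2) ∩ E(T_3) = ∅. -/

import Mathlib

open Finset SimpleGraph

namespace Stmt11Aux
set_option linter.unusedSectionVars false

open scoped Classical

variable {V : Type*} [Fintype V] [DecidableEq V]

/-- graph from a finset of edges -/
def sg (S : Finset (Sym2 V)) : SimpleGraph V := SimpleGraph.fromEdgeSet ↑S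

lemma sg_adj {S : Finset (Sym2 V)} {a b : V} : (sg S).Adj a b ↔ s(a,b) ∈ S ∧ a ≠ b := by
  simp [sg]

lemma sg_mono {S T : Finset (Sym2 V)} (h : S ⊆ T) : sg S ≤ sg T := by
  intro a b hab
  rw [sg_adj] at hab ⊢
  exact ⟨h hab.1, hab.2⟩

@[simp] lemma sg_empty : sg (∅ : Finset (Sym2 V)) = ⊥ := by
  simp [sg]

lemma mem_of_sg_edge {S : Finset (Sym2 V)} {e : Sym2 V} (he : e ∈ (sg S).edgeSet) : e ∈ S := by
  rw [sg, edgeSet_fromEdgeSet] at he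
  exact he.1

lemma sg_erase {S : Finset (Sym2 V)} {g : Sym2 V} :
    sg (S.erase g) = (sg S).deleteEdges {g} := by
  ext a b
  simp only [sg_adj, deleteEdges_adj, Set.mem_singleton_iff, mem_erase]
  tauto

/-- a walk from inside U to outside U uses a crossing adjacency -/
lemma walk_cross {H : SimpleGraph V} {u v : V} (w : H.Walk u v) (U : Set V)
    (hu : u ∈ U) (hv : v ∉ U) : ∃ a b, H.Adj a b ∧ a ∈ U ∧ b ∉ U := by
  induction w with
  | nil => exact absurd hu hv
  | @cons x y z h q ih =>
    by_cases hy : y ∈ U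
    · exact ih hy hv
    · exact ⟨x, y, h, hu, hy⟩

/-- transfer reachability along per-edge reachability -/
lemma reach_transfer {H₁ H₂ : SimpleGraph V}
    (h : ∀ a b, H₁.Adj a b → H₂.Reachable a b) {u v : V}
    (hr : H₁.Reachable u v) : H₂.Reachable u v := by
  obtain ⟨w⟩ := hr
  induction w with
  | nil => exact Reachable.refl _
  | @cons x y z hadj q ih => exact (h _ _ hadj).trans ih


lemma reach_del_edge {H : SimpleGraph V} {a b u v : V} (w : H.Walk u v) :
    (H.deleteEdges {s(a,b)}).Reachable u v ∨
    ((H.deleteEdges {s(a,b)}).Reachable u a ∧ (H.deleteEdges {s(a,b)}).Reachable b v) ∨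
    ((H.deleteEdges {s(a,b)}).Reachable u b ∧ (H.deleteEdges {s(a,b)}).Reachable a v) := by
  set H' := H.deleteEdges {s(a,b)} with hH'
  induction w with
  | nil => exact Or.inl (Reachable.refl _)
  | @cons x y z hadj q ih =>
    by_cases he : s(x,y) = s(a,b)
    · rw [Sym2.eq_iff] at he
      rcases he with ⟨hxa, hyb⟩ | ⟨hxb, hya⟩
      · subst hxa; subst hyb
        rcases ih with h | ⟨h1, h2⟩ | ⟨h1, h2⟩
        · exact Or.inr (Or.inl ⟨Reachable.refl _, h⟩)
        · exact Or.inr (Or.inl ⟨Reachable.refl _, h2⟩)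
        · exact Or.inl h2
      · subst hxb; subst hya
        rcases ih with h | ⟨h1, h2⟩ | ⟨h1, h2⟩
        · exact Or.inr (Or.inr ⟨Reachable.refl _, h⟩)
        · exact Or.inl h2
        · exact Or.inr (Or.inr ⟨Reachable.refl _, h2⟩)
    · have hadj' : H'.Adj x y := by
        rw [hH', deleteEdges_adj]
        exact ⟨hadj, by simpa using he⟩
      rcases ih with h | ⟨h1, h2⟩ | ⟨h1, h2⟩
      · exact Or.inl ((hadj'.reachable).trans h)
      · exact Or.inr (Or.inl ⟨(hadj'.reachable).trans h1, h2⟩)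
      · exact Or.inr (Or.inr ⟨(hadj'.reachable).trans h1, h2⟩)

lemma comps_del_le (H : SimpleGraph V) (a b : V) :
    Nat.card (H.deleteEdges {s(a,b)}).ConnectedComponent ≤
      Nat.card H.ConnectedComponent + 1 := by
  set H' := H.deleteEdges {s(a,b)} with hH'
  have hle : H' ≤ H := deleteEdges_le _
  set φ : H'.ConnectedComponent → H.ConnectedComponent :=
    SimpleGraph.ConnectedComponent.map (SimpleGraph.Hom.ofLE hle) with hφ
  have hφmk : ∀ v : V, φ (H'.connectedComponentMk v) = H.connectedComponentMk v := by
    intro v; rfl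
  set f : H'.ConnectedComponent → Option H.ConnectedComponent :=
    fun c => if c = H'.connectedComponentMk b then none else some (φ c) with hf
  have hinj : Function.Injective f := by
    intro c₁ c₂ hc
    by_cases h1 : c₁ = H'.connectedComponentMk b <;>
      by_cases h2 : c₂ = H'.connectedComponentMk b
    · rw [h1, h2]
    · simp only [hf, if_pos h1, if_neg h2] at hc; exact absurd hc.symm (Option.some_ne_none _)
    · simp only [hf, if_neg h1, if_pos h2] at hc; exact absurd hc (Option.some_ne_none _)
    · simp only [hf, if_neg h1, if_neg h2, Option.some_inj] at hc
      obtain ⟨u, rfl⟩ := c₁.exists_rep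
      obtain ⟨w, rfl⟩ := c₂.exists_rep
      have hc' : H.connectedComponentMk u = H.connectedComponentMk w := hc
      rw [SimpleGraph.ConnectedComponent.eq] at hc'
      obtain ⟨wk⟩ := hc'
      rcases reach_del_edge (a := a) (b := b) wk with h | ⟨ha1, ha2⟩ | ⟨ha1, ha2⟩
      · exact SimpleGraph.ConnectedComponent.sound h
      · exact absurd (SimpleGraph.ConnectedComponent.sound ha2.symm) h2
      · exact absurd (SimpleGraph.ConnectedComponent.sound ha1) h1
  calc Nat.card H'.ConnectedComponent ≤ Nat.card (Option H.ConnectedComponent) :=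
        Nat.card_le_card_of_injective f hinj
    _ = Nat.card H.ConnectedComponent + 1 := by
        simp [Nat.card_eq_fintype_card]

lemma fib_lemma {α β : Type*} [Finite α] (f : α → β) (hf : Function.Surjective f)
    {x y : α} (hxy : x ≠ y) (hfxy : f x = f y) :
    Nat.card β + 1 ≤ Nat.card α := by
  classical
  cases nonempty_fintype α
  haveI : Fintype β := Fintype.ofSurjective f hf
  rw [Nat.card_eq_fintype_card, Nat.card_eq_fintype_card]
  have himg : (Finset.univ.erase x).image f = Finset.univ := by
    apply Finset.eq_univ_of_forall
    intro b
    obtain ⟨z, rfl⟩ := hf b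
    by_cases hz : z = x
    · subst hz
      exact Finset.mem_image.2 ⟨y, Finset.mem_erase.2 ⟨fun h => hxy h.symm, Finset.mem_univ _⟩,
        hfxy.symm⟩
    · exact Finset.mem_image.2 ⟨z, Finset.mem_erase.2 ⟨hz, Finset.mem_univ _⟩, rfl⟩
  have h1 : Fintype.card β = ((Finset.univ.erase x).image f).card := by
    rw [himg, Finset.card_univ]
  have h2 : ((Finset.univ.erase x).image f).card ≤ (Finset.univ.erase x).card :=
    Finset.card_image_le
  have h3 : (Finset.univ.erase x).card = Fintype.card α - 1 := by
    rw [Finset.card_erase_of_mem (Finset.mem_univ _), Finset.card_univ]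
  have h4 : 1 ≤ Fintype.card α := Fintype.card_pos_iff.2 ⟨x⟩
  omega

lemma comps_del_ge {H : SimpleGraph V} {a b : V} (hab : H.Adj a b)
    (hnr : ¬ (H.deleteEdges {s(a,b)}).Reachable a b) :
    Nat.card H.ConnectedComponent + 1 ≤
      Nat.card (H.deleteEdges {s(a,b)}).ConnectedComponent := by
  set H' := H.deleteEdges {s(a,b)} with hH'
  have hle : H' ≤ H := deleteEdges_le _
  set φ : H'.ConnectedComponent → H.ConnectedComponent :=
    SimpleGraph.ConnectedComponent.map (SimpleGraph.Hom.ofLE hle) with hφ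
  have hsurj : Function.Surjective φ := by
    intro c
    obtain ⟨v, rfl⟩ := c.exists_rep
    exact ⟨H'.connectedComponentMk v, rfl⟩
  have hx : H'.connectedComponentMk a ≠ H'.connectedComponentMk b := by
    intro h
    exact hnr (SimpleGraph.ConnectedComponent.eq.1 h)
  have hfx : φ (H'.connectedComponentMk a) = φ (H'.connectedComponentMk b) := by
    show H.connectedComponentMk a = H.connectedComponentMk b
    exact SimpleGraph.ConnectedComponent.sound hab.reachable
  exact fib_lemma φ hsurj hx hfx

lemma comps_bot : Nat.card (⊥ : SimpleGraph V).ConnectedComponent = Fintype.card V := by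
  have : Function.Bijective ((⊥ : SimpleGraph V).connectedComponentMk) := by
    constructor
    · intro u v h
      exact reachable_bot.1 (SimpleGraph.ConnectedComponent.eq.1 h)
    · intro c; exact c.exists_rep
  rw [← Nat.card_eq_fintype_card]
  exact (Nat.card_eq_of_bijective _ this).symm

lemma acyclic_anti {H H' : SimpleGraph V} (h : H ≤ H') (h' : H'.IsAcyclic) : H.IsAcyclic := by
  intro v c hc
  exact h' (c.mapLe h) (hc.mapLe h)

lemma eq1 (S : Finset (Sym2 V)) (hS : ∀ e ∈ S, ¬ e.IsDiag) :
    Fintype.card V ≤ Nat.card (sg S).ConnectedComponent + S.card := by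
  induction S using Finset.strongInductionOn with
  | _ S ih =>
    rcases S.eq_empty_or_nonempty with rfl | ⟨g, hg⟩
    · simp only [sg_empty, Finset.card_empty, add_zero, comps_bot]; exact le_rfl
    · induction g using Sym2.ind with
      | _ a b =>
        have hd := hS _ hg
        have hab : a ≠ b := fun h => hd (by simp [h])
        have h1 := ih (S.erase s(a,b)) (Finset.erase_ssubset hg)
          (fun e he => hS e (Finset.mem_of_mem_erase he))
        rw [sg_erase] at h1
        have h2 := comps_del_le (sg S) a b
        have h3 : (S.erase s(a,b)).card = S.card - 1 := Finset.card_erase_of_mem hg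
        have h4 : 1 ≤ S.card := Finset.card_pos.2 ⟨_, hg⟩
        omega

lemma eq2 (S : Finset (Sym2 V)) (hS : ∀ e ∈ S, ¬ e.IsDiag) (hac : (sg S).IsAcyclic) :
    Nat.card (sg S).ConnectedComponent + S.card ≤ Fintype.card V := by
  induction S using Finset.strongInductionOn with
  | _ S ih =>
    rcases S.eq_empty_or_nonempty with rfl | ⟨g, hg⟩
    · simp only [sg_empty, Finset.card_empty, add_zero, comps_bot]; exact le_rfl
    · induction g using Sym2.ind with
      | _ a b =>
        have hd := hS _ hg
        have hab : a ≠ b := fun h => hd (by simp [h])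
        have hadj : (sg S).Adj a b := sg_adj.2 ⟨hg, hab⟩
        have hbr : (sg S).IsBridge s(a,b) :=
          (isAcyclic_iff_forall_edge_isBridge.1 hac) ((SimpleGraph.mem_edgeSet _).mpr hadj)
        rw [isBridge_iff] at hbr
        have hnr : ¬ ((sg S).deleteEdges {s(a,b)}).Reachable a b := hbr
        have h2 := comps_del_ge hadj hnr
        have hacer : (sg (S.erase s(a,b))).IsAcyclic := by
          apply acyclic_anti (sg_mono (Finset.erase_subset _ _)) hac
        have h1 := ih (S.erase s(a,b)) (Finset.erase_ssubset hg)
          (fun e he => hS e (Finset.mem_of_mem_erase he)) hacer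
        rw [sg_erase] at h1
        have h3 : (S.erase s(a,b)).card = S.card - 1 := Finset.card_erase_of_mem hg
        have h4 : 1 ≤ S.card := Finset.card_pos.2 ⟨_, hg⟩
        omega

lemma not_reach_del_of_path {H : SimpleGraph V} (hac : H.IsAcyclic) {u v : V}
    (p : H.Walk u v) (hp : p.IsPath) {g : Sym2 V} (hg : g ∈ p.edges) :
    ¬ (H.deleteEdges {g}).Reachable u v := by
  rintro ⟨q0⟩
  set q := q0.toPath with hq
  have hqedges : (q : (H.deleteEdges {g}).Walk u v).edges ⊆ q0.edges :=
    Walk.edges_toPath_subset q0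
  have hsub : ∀ e ∈ (q : (H.deleteEdges {g}).Walk u v).edges, e ∈ H.edgeSet := by
    intro e he
    have := Walk.edges_subset_edgeSet _ (hqedges he)
    rw [edgeSet_deleteEdges] at this
    exact this.1
  set q' := (q : (H.deleteEdges {g}).Walk u v).transfer H hsub with hq'
  have hq'path : q'.IsPath := q.2.transfer hsub
  have hpq : (⟨p, hp⟩ : H.Path u v) = ⟨q', hq'path⟩ := hac.path_unique _ _
  have hgq : g ∈ q'.edges := by
    have : p = q' := congrArg Subtype.val hpq
    rw [← this]
    exact hg
  rw [hq', Walk.edges_transfer] at hgq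
  have := Walk.edges_subset_edgeSet _ (hqedges hgq)
  rw [edgeSet_deleteEdges] at this
  exact this.2 rfl

lemma acyclic_insert {S : Finset (Sym2 V)} (hac : (sg S).IsAcyclic) {u v : V} (huv : u ≠ v)
    (hnr : ¬ (sg S).Reachable u v) : (sg (insert s(u,v) S)).IsAcyclic := by
  have hfS : s(u,v) ∉ S := by
    intro h
    exact hnr (sg_adj.2 ⟨h, huv⟩).reachable
  set H' := sg (insert s(u,v) S) with hH'
  have hdel : H'.deleteEdges {s(u,v)} = sg S := by
    rw [← sg_erase, Finset.erase_insert hfS]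
  have hadj : H'.Adj u v := sg_adj.2 ⟨Finset.mem_insert_self _ _, huv⟩
  have hbr : H'.IsBridge s(u,v) := by
    rw [isBridge_iff]
    refine ?_
    show ¬ (H'.deleteEdges {s(u,v)}).Reachable u v
    rw [hdel]
    exact hnr
  rw [isBridge_iff_forall_cycle_notMem ((SimpleGraph.mem_edgeSet _).mpr hadj)] at hbr
  intro w c hc
  by_cases he : s(u,v) ∈ c.edges
  · exact hbr c hc he
  · have hsub : ∀ e ∈ c.edges, e ∈ (sg S).edgeSet := by
      intro e hce
      have h1 := Walk.edges_subset_edgeSet _ hce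
      rw [hH', sg, edgeSet_fromEdgeSet] at h1
      have h2 : e ∈ (insert s(u,v) S : Finset (Sym2 V)) := h1.1
      rcases Finset.mem_insert.1 h2 with rfl | h3
      · exact absurd hce he
      · rw [sg, edgeSet_fromEdgeSet]
        exact ⟨h3, h1.2⟩
    exact hac (c.transfer (sg S) hsub) (hc.transfer hsub)

lemma exchange_acyclic {S : Finset (Sym2 V)} (hac : (sg S).IsAcyclic)
    {u v : V} (huv : u ≠ v) (hfS : s(u,v) ∉ S)
    (p : (sg S).Walk u v) (hp : p.IsPath) {g : Sym2 V} (hg : g ∈ p.edges) :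
    (sg (insert s(u,v) (S.erase g))).IsAcyclic := by
  have h1 : (sg (S.erase g)).IsAcyclic :=
    acyclic_anti (sg_mono (Finset.erase_subset _ _)) hac
  have h2 : ¬ (sg (S.erase g)).Reachable u v := by
    rw [sg_erase]
    exact not_reach_del_of_path hac p hp hg
  exact acyclic_insert h1 huv h2

lemma fin3_exists (i : Fin 3) : ∃ j k : Fin 3, j ≠ k ∧ j ≠ i ∧ k ≠ i := by
  fin_cases i
  · exact ⟨1, 2, by decide, by decide, by decide⟩
  · exact ⟨0, 2, by decide, by decide, by decide⟩
  · exact ⟨0, 1, by decide, by decide, by decide⟩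

lemma fin3_cover : ∀ i j k l : Fin 3, j ≠ k → j ≠ i → k ≠ i → (l = i ∨ l = j ∨ l = k) := by
  decide

section Family

variable (G : SimpleGraph V)

def Valid (F : Fin 3 → Finset (Sym2 V)) : Prop :=
  (∀ i, F i ⊆ G.edgeFinset) ∧ (∀ i, (sg (F i)).IsAcyclic) ∧ ∀ e, ¬ (∀ i, e ∈ F i)

def siz (F : Fin 3 → Finset (Sym2 V)) : ℕ := ∑ i, (F i).card

def Unused (F : Fin 3 → Finset (Sym2 V)) (e : Sym2 V) : Prop :=
  ∀ i j, e ∈ F i → e ∈ F j → i = j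

def Step (F F' : Fin 3 → Finset (Sym2 V)) : Prop :=
  ∃ i e g, e ∈ G.edgeFinset ∧ Unused F e ∧ e ∉ F i ∧ g ∈ F i ∧
    (sg (insert e ((F i).erase g))).IsAcyclic ∧
    F' = Function.update F i (insert e ((F i).erase g))

def Reach (F F' : Fin 3 → Finset (Sym2 V)) : Prop := Relation.ReflTransGen (Step G) F F'

def StepN : ℕ → (Fin 3 → Finset (Sym2 V)) → (Fin 3 → Finset (Sym2 V)) → Prop
  | 0, F, F' => F = F'
  | (d+1), F, F' => ∃ F₁, Step G F F₁ ∧ StepN d F₁ F'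

variable {G}

lemma not_isDiag_of_mem_edgeFinset {e : Sym2 V} (he : e ∈ G.edgeFinset) : ¬ e.IsDiag :=
  SimpleGraph.not_isDiag_of_mem_edgeSet _ (SimpleGraph.mem_edgeFinset.1 he)

lemma step_valid {F F' : Fin 3 → Finset (Sym2 V)} (hV : Valid G F) (hs : Step G F F') :
    Valid G F' := by
  obtain ⟨i, e, g, heG, heU, hei, hgi, hac, rfl⟩ := hs
  obtain ⟨hsub, hacy, hthird⟩ := hV
  refine ⟨?_, ?_, ?_⟩
  · intro j
    by_cases hj : j = i
    · subst hj
      rw [Function.update_self]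
      intro x hx
      rcases Finset.mem_insert.1 hx with rfl | hx'
      · exact heG
      · exact hsub _ (Finset.mem_of_mem_erase hx')
    · rw [Function.update_of_ne hj]; exact hsub _
  · intro j
    by_cases hj : j = i
    · subst hj; rw [Function.update_self]; exact hac
    · rw [Function.update_of_ne hj]; exact hacy _
  · intro e' h'
    obtain ⟨j, k, hjk, hji, hki⟩ := fin3_exists i
    have hj' := h' j
    have hk' := h' k
    rw [Function.update_of_ne hji] at hj'
    rw [Function.update_of_ne hki] at hk'
    by_cases hee : e' = e
    · subst hee; exact hjk (heU j k hj' hk')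
    · have hi' := h' i
      rw [Function.update_self] at hi'
      rcases Finset.mem_insert.1 hi' with rfl | hi''
      · exact hee rfl
      · have hiF : e' ∈ F i := Finset.mem_of_mem_erase hi''
        apply hthird e'
        intro l
        rcases fin3_cover i j k l hjk hji hki with rfl | rfl | rfl
        · exact hiF
        · exact hj'
        · exact hk'

lemma step_siz {F F' : Fin 3 → Finset (Sym2 V)} (hs : Step G F F') : siz F' = siz F := by
  obtain ⟨i, e, g, heG, heU, hei, hgi, hac, rfl⟩ := hs
  have hcard : (insert e ((F i).erase g)).card = (F i).card := by
    have h1 : e ∉ (F i).erase g := fun h => hei (Finset.mem_of_mem_erase h)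
    rw [Finset.card_insert_of_notMem h1, Finset.card_erase_of_mem hgi]
    have : 1 ≤ (F i).card := Finset.card_pos.2 ⟨g, hgi⟩
    omega
  have hfun : (fun j => #(Function.update F i (insert e ((F i).erase g)) j))
      = Function.update (fun j => #(F j)) i (#(insert e ((F i).erase g))) := by
    funext j
    by_cases hj : j = i
    · subst hj; simp
    · simp [Function.update_of_ne hj]
  show ∑ j, #(Function.update F i (insert e ((F i).erase g)) j) = ∑ j, #(F j)
  rw [hfun, Finset.sum_update_of_mem (Finset.mem_univ i), hcard]
  rw [Finset.sdiff_singleton_eq_erase]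
  exact Finset.add_sum_erase _ (fun j => #(F j)) (Finset.mem_univ i)

lemma reach_valid {F F' : Fin 3 → Finset (Sym2 V)} (hV : Valid G F) (hr : Reach G F F') :
    Valid G F' := by
  induction hr with
  | refl => exact hV
  | tail _ hstep ih => exact step_valid ih hstep

lemma reach_siz {F F' : Fin 3 → Finset (Sym2 V)} (hr : Reach G F F') : siz F' = siz F := by
  induction hr with
  | refl => rfl
  | tail _ hstep ih => rw [step_siz hstep, ih]

lemma stepN_reach {d : ℕ} {F F' : Fin 3 → Finset (Sym2 V)} (h : StepN G d F F') :
    Reach G F F' := by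
  induction d generalizing F with
  | zero => cases h; exact Relation.ReflTransGen.refl
  | succ d ih =>
    obtain ⟨F₁, hs, hsn⟩ := h
    exact Relation.ReflTransGen.head hs (ih hsn)

lemma stepN_snoc {d : ℕ} {F F₁ F₂ : Fin 3 → Finset (Sym2 V)} (h : StepN G d F F₁)
    (hs : Step G F₁ F₂) : StepN G (d+1) F F₂ := by
  induction d generalizing F with
  | zero => cases h; exact ⟨F₂, hs, rfl⟩
  | succ d ih =>
    obtain ⟨F', hste, hsn⟩ := h
    exact ⟨F', hste, ih hsn⟩

lemma reach_stepN {F F' : Fin 3 → Finset (Sym2 V)} (hr : Reach G F F') :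
    ∃ d, StepN G d F F' := by
  induction hr with
  | refl => exact ⟨0, rfl⟩
  | tail _ hstep ih =>
    obtain ⟨d, hd⟩ := ih
    exact ⟨d+1, stepN_snoc hd hstep⟩

lemma exists_max (G : SimpleGraph V) :
    ∃ F, Valid G F ∧ ∀ F', Valid G F' → siz F' ≤ siz F := by
  have hne : (Finset.univ.filter (fun F : Fin 3 → Finset (Sym2 V) => Valid G F)).Nonempty := by
    refine ⟨fun _ => ∅, ?_⟩
    rw [Finset.mem_filter]
    exact ⟨Finset.mem_univ _, fun _ => by simp, fun i => by simp [isAcyclic_bot],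
      fun e h => by simpa using h 0⟩
  obtain ⟨F, hF, hmax⟩ := Finset.exists_max_image _ siz hne
  rw [Finset.mem_filter] at hF
  refine ⟨F, hF.2, fun F' hF' => hmax F' ?_⟩
  rw [Finset.mem_filter]
  exact ⟨Finset.mem_univ _, hF'⟩

end Family

section Claim

variable {G : SimpleGraph V}

/-- edges unused in some reachable family -/
noncomputable def DSet (G : SimpleGraph V) (F0 : Fin 3 → Finset (Sym2 V)) : Finset (Sym2 V) :=
  G.edgeFinset.filter (fun f => ∃ F', Reach G F0 F' ∧ Unused F' f)

lemma unused_of_removed {F : Fin 3 → Finset (Sym2 V)} (hVF : Valid G F) {i : Fin 3}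
    {e : Sym2 V} (heF : e ∈ F i) {B : Finset (Sym2 V)} (heB : e ∉ B) :
    Unused (Function.update F i B) e := by
  intro j k hj hk
  by_cases hji : j = i
  · subst hji; rw [Function.update_self] at hj; exact absurd hj heB
  by_cases hki : k = i
  · subst hki; rw [Function.update_self] at hk; exact absurd hk heB
  rw [Function.update_of_ne hji] at hj
  rw [Function.update_of_ne hki] at hk
  by_contra hjk
  apply hVF.2.2 e
  intro l
  rcases fin3_cover i j k l hjk hji hki with rfl | rfl | rfl
  · exact heF
  · exact hj
  · exact hk

lemma claim0 {F0 F : Fin 3 → Finset (Sym2 V)} (hV0 : Valid G F0)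
    (hmax : ∀ F', Valid G F' → siz F' ≤ siz F0)
    (hreach : Reach G F0 F) {f : Sym2 V} (hfG : f ∈ G.edgeFinset) (hU : Unused F f)
    (i : Fin 3) {u v : V} (hf : f = s(u,v)) :
    (sg ((F i).filter (· ∈ DSet G F0))).Reachable u v := by
  subst hf
  have hVF : Valid G F := reach_valid hV0 hreach
  have huv : u ≠ v := by
    have := not_isDiag_of_mem_edgeFinset hfG
    simpa using this
  by_cases hFi : s(u,v) ∈ F i
  · have hfD : s(u,v) ∈ DSet G F0 := Finset.mem_filter.2 ⟨hfG, F, hreach, hU⟩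
    exact ((sg_adj).2 ⟨Finset.mem_filter.2 ⟨hFi, hfD⟩, huv⟩).reachable
  by_cases hnr : (sg (F i)).Reachable u v
  · -- exchange along a path
    obtain ⟨w⟩ := hnr
    set p := w.toPath with hp
    have hsub : ∀ e ∈ (p : (sg (F i)).Walk u v).edges,
        e ∈ (sg ((F i).filter (· ∈ DSet G F0))).edgeSet := by
      intro e he
      have heF : e ∈ F i := mem_of_sg_edge (Walk.edges_subset_edgeSet _ he)
      have heG : e ∈ G.edgeFinset := hVF.1 i heF
      have hediag : ¬ e.IsDiag := not_isDiag_of_mem_edgeFinset heG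
      have hef : e ≠ s(u,v) := fun h => hFi (h ▸ heF)
      have hacyc : (sg (insert s(u,v) ((F i).erase e))).IsAcyclic :=
        exchange_acyclic (hVF.2.1 i) huv hFi (p : (sg (F i)).Walk u v) p.2 he
      have hstep : Step G F (Function.update F i (insert s(u,v) ((F i).erase e))) :=
        ⟨i, s(u,v), e, hfG, hU, hFi, heF, hacyc, rfl⟩
      have heB : e ∉ insert s(u,v) ((F i).erase e) := by
        intro h
        rcases Finset.mem_insert.1 h with h' | h'
        · exact hef h'
        · exact (Finset.notMem_erase _ _) h'
      have hU' : Unused (Function.update F i (insert s(u,v) ((F i).erase e))) e :=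
        unused_of_removed hVF heF heB
      have heD : e ∈ DSet G F0 :=
        Finset.mem_filter.2 ⟨heG, _, hreach.tail hstep, hU'⟩
      rw [sg, edgeSet_fromEdgeSet]
      exact ⟨Finset.mem_coe.2 (Finset.mem_filter.2 ⟨heF, heD⟩), hediag⟩
    exact ⟨(p : (sg (F i)).Walk u v).transfer _ hsub⟩
  · -- augment: contradiction with maximality
    exfalso
    set F' := Function.update F i (insert s(u,v) (F i)) with hF'
    have hV' : Valid G F' := by
      refine ⟨?_, ?_, ?_⟩
      · intro j
        by_cases hj : j = i
        · rw [hF', hj, Function.update_self]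
          intro x hx
          rcases Finset.mem_insert.1 hx with rfl | hx'
          · exact hfG
          · exact hVF.1 i hx'
        · rw [hF', Function.update_of_ne hj]; exact hVF.1 j
      · intro j
        by_cases hj : j = i
        · rw [hF', hj, Function.update_self]
          exact acyclic_insert (hVF.2.1 i) huv hnr
        · rw [hF', Function.update_of_ne hj]; exact hVF.2.1 j
      · intro e' h'
        obtain ⟨j, k, hjk, hji, hki⟩ := fin3_exists i
        have hj' := h' j
        have hk' := h' k
        rw [hF', Function.update_of_ne hji] at hj'
        rw [hF', Function.update_of_ne hki] at hk'
        by_cases hee : e' = s(u,v)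
        · subst hee; exact hjk (hU j k hj' hk')
        · have hi' := h' i
          rw [hF', Function.update_self] at hi'
          rcases Finset.mem_insert.1 hi' with h'' | hi''
          · exact hee h''
          · apply hVF.2.2 e'
            intro l
            rcases fin3_cover i j k l hjk hji hki with rfl | rfl | rfl
            · exact hi''
            · exact hj'
            · exact hk'
    have hsiz : siz F' = siz F + 1 := by
      have hfun : (fun j => #(F' j)) = Function.update (fun j => #(F j)) i (#(F i) + 1) := by
        funext j
        by_cases hj : j = i
        · subst hj; rw [hF']; simp [Finset.card_insert_of_notMem hFi]
        · rw [hF']; simp [Function.update_of_ne hj]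
      show ∑ j, #(F' j) = (∑ j, #(F j)) + 1
      rw [hfun, Finset.sum_update_of_mem (Finset.mem_univ i)]
      rw [Finset.sdiff_singleton_eq_erase,
        ← Finset.add_sum_erase _ (fun j => #(F j)) (Finset.mem_univ i)]
      omega
    have h1 : siz F' ≤ siz F0 := hmax F' hV'
    have h2 : siz F = siz F0 := reach_siz hreach
    omega

lemma claim_main {F0 : Fin 3 → Finset (Sym2 V)} (hV0 : Valid G F0)
    (hmax : ∀ F', Valid G F' → siz F' ≤ siz F0) :
    ∀ d F F₂ f, Reach G F0 F → StepN G d F F₂ → f ∈ G.edgeFinset → Unused F₂ f →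
    ∀ i (u v : V), f = s(u,v) → (sg ((F i).filter (· ∈ DSet G F0))).Reachable u v := by
  intro d
  induction d with
  | zero =>
    intro F F₂ f hr h0 hfG hU i u v hf
    have h0' : F = F₂ := h0
    subst h0'
    exact claim0 hV0 hmax hr hfG hU i hf
  | succ d ih =>
    rintro F F₂ f hr ⟨F₁, hs, hsn⟩ hfG hU i u v hf
    obtain ⟨i₀, e, g, heG, heU, hei, hgi, hac, rfl⟩ := hs
    have hstep : Step G F (Function.update F i₀ (insert e ((F i₀).erase g))) :=
      ⟨i₀, e, g, heG, heU, hei, hgi, hac, rfl⟩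
    have hr1 : Reach G F0 (Function.update F i₀ (insert e ((F i₀).erase g))) :=
      hr.tail hstep
    have h1 := ih _ F₂ f hr1 hsn hfG hU i u v hf
    by_cases hii : i = i₀
    · subst hii
      rw [Function.update_self] at h1
      refine reach_transfer ?_ h1
      intro a b hab
      rw [sg_adj, Finset.mem_filter] at hab
      obtain ⟨⟨hm, hmD⟩, hne⟩ := hab
      rcases Finset.mem_insert.1 hm with h' | hm'
      · subst h'
        exact claim0 hV0 hmax hr heG heU i rfl
      · exact ((sg_adj).2 ⟨Finset.mem_filter.2
          ⟨Finset.mem_of_mem_erase hm', hmD⟩, hne⟩).reachable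
    · rwa [Function.update_of_ne hii] at h1

end Claim

section Main

lemma mem_D_isdiag {G : SimpleGraph V} {F0 : Fin 3 → Finset (Sym2 V)} {e : Sym2 V}
    (he : e ∈ DSet G F0) :
    (Sym2.map (sg (DSet G F0)).connectedComponentMk e).IsDiag := by
  induction e using Sym2.ind with
  | _ a b =>
    have hG : s(a,b) ∈ G.edgeFinset := (Finset.mem_filter.1 he).1
    have hab : a ≠ b := by
      have := not_isDiag_of_mem_edgeFinset hG
      simpa using this
    have hadj : (sg (DSet G F0)).Adj a b := sg_adj.2 ⟨he, hab⟩
    rw [Sym2.map_pair_eq, Sym2.mk_isDiag_iff]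
    exact SimpleGraph.ConnectedComponent.sound hadj.reachable

lemma three_trees (G : SimpleGraph V) (hconn : G.Connected)
    (hcut : ∀ U : Finset V, U.Nonempty → U ≠ Finset.univ →
      3 ≤ #(G.edgeFinset.filter (fun e => ∃ a b, e = s(a,b) ∧ a ∈ U ∧ b ∉ U))) :
    ∃ F : Fin 3 → Finset (Sym2 V), Valid G F ∧ ∀ i, (sg (F i)).Connected := by
  obtain ⟨F0, hV0, hmax⟩ := exists_max G
  set D := DSet G F0 with hDdef
  have hDG : ∀ f ∈ D, ∀ (i : Fin 3) (u v : V), f = s(u,v) →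
      (sg ((F0 i).filter (· ∈ D))).Reachable u v := by
    intro f hf i u v hfuv
    rw [hDdef, DSet, Finset.mem_filter] at hf
    obtain ⟨hfG, F₂, hr2, hU2⟩ := hf
    obtain ⟨d, hsn⟩ := reach_stepN hr2
    exact claim_main hV0 hmax d F0 F₂ f Relation.ReflTransGen.refl hsn hfG hU2 i u v hfuv
  have hDsub : ∀ i : Fin 3, (F0 i).filter (· ∈ D) ⊆ D :=
    fun i e he => (Finset.mem_filter.1 he).2
  have hMle : ∀ i : Fin 3, sg ((F0 i).filter (· ∈ D)) ≤ sg (F0 i) :=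
    fun i => sg_mono (Finset.filter_subset _ _)
  have hDreach : ∀ (i : Fin 3) (u v : V), (sg D).Reachable u v →
      (sg ((F0 i).filter (· ∈ D))).Reachable u v := by
    intro i u v h
    refine reach_transfer ?_ h
    intro a b hab
    rw [sg_adj] at hab
    exact hDG _ hab.1 i a b rfl
  rcases subsingleton_or_nontrivial (sg D).ConnectedComponent with hss | hnt
  · refine ⟨F0, hV0, fun i => ?_⟩
    have hpre : (sg (F0 i)).Preconnected := by
      intro u v
      have h1 : (sg D).Reachable u v :=
        (SimpleGraph.ConnectedComponent.eq).1 (Subsingleton.elim _ _)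
      exact Reachable.mono (hMle i) (hDreach i u v h1)
    haveI : Nonempty V := hconn.nonempty
    exact SimpleGraph.Connected.mk hpre
  · exfalso
    haveI : Nonempty V := hconn.nonempty
    set cF := (sg D).connectedComponentMk with hcF
    set q := Nat.card (sg D).ConnectedComponent with hq
    -- (A) component correspondence
    have hA : ∀ i : Fin 3,
        Nat.card (sg ((F0 i).filter (· ∈ D))).ConnectedComponent = q := by
      intro i
      refine (Nat.card_eq_of_bijective
        (SimpleGraph.ConnectedComponent.map
          (SimpleGraph.Hom.ofLE (sg_mono (hDsub i)))) ⟨?_, ?_⟩)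
      · intro c₁ c₂ hc
        obtain ⟨x, rfl⟩ := c₁.exists_rep
        obtain ⟨y, rfl⟩ := c₂.exists_rep
        have hc' : (sg D).connectedComponentMk x = (sg D).connectedComponentMk y := hc
        exact SimpleGraph.ConnectedComponent.sound
          (hDreach i x y (SimpleGraph.ConnectedComponent.eq.1 hc'))
      · intro c
        obtain ⟨x, rfl⟩ := c.exists_rep
        exact ⟨(sg ((F0 i).filter (· ∈ D))).connectedComponentMk x, rfl⟩
    have hndiag : ∀ (i : Fin 3), ∀ e ∈ F0 i, ¬ e.IsDiag :=
      fun i e he => not_isDiag_of_mem_edgeFinset (hV0.1 i he)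
    have hB : ∀ i : Fin 3, Fintype.card V ≤ q + #((F0 i).filter (· ∈ D)) := by
      intro i
      have := eq1 ((F0 i).filter (· ∈ D))
        (fun e he => hndiag i e (Finset.mem_filter.1 he).1)
      rwa [hA i] at this
    have hC : ∀ i : Fin 3,
        Nat.card (sg (F0 i)).ConnectedComponent + #(F0 i) ≤ Fintype.card V :=
      fun i => eq2 (F0 i) (hndiag i) (hV0.2.1 i)
    -- cross edges
    set cP := fun e : Sym2 V => ¬ (Sym2.map cF e).IsDiag with hcP
    set crossE := G.edgeFinset.filter cP with hcrossE
    set crossi := fun i : Fin 3 => (F0 i).filter cP with hcrossi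
    have hE : ∀ i : Fin 3, #(crossi i) + #((F0 i).filter (· ∈ D)) ≤ #(F0 i) := by
      intro i
      have hdisj : Disjoint (crossi i) ((F0 i).filter (· ∈ D)) := by
        rw [Finset.disjoint_left]
        intro e he1 he2
        exact (Finset.mem_filter.1 he1).2 (mem_D_isdiag (Finset.mem_filter.1 he2).2)
      have hsub : crossi i ∪ (F0 i).filter (· ∈ D) ⊆ F0 i := by
        intro e he
        rcases Finset.mem_union.1 he with h | h
        · exact (Finset.mem_filter.1 h).1
        · exact (Finset.mem_filter.1 h).1
      calc #(crossi i) + #((F0 i).filter (· ∈ D))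
          = #(crossi i ∪ (F0 i).filter (· ∈ D)) := (Finset.card_union_of_disjoint hdisj).symm
        _ ≤ #(F0 i) := Finset.card_le_card hsub
    have hFc : ∀ i : Fin 3,
        #(crossi i) + Nat.card (sg (F0 i)).ConnectedComponent ≤ q := by
      intro i
      have h1 := hB i
      have h2 := hC i
      have h3 := hE i
      omega
    have hGc : ∀ i : Fin 3, 1 ≤ Nat.card (sg (F0 i)).ConnectedComponent := by
      intro i
      haveI : Nonempty (sg (F0 i)).ConnectedComponent :=
        ⟨(sg (F0 i)).connectedComponentMk (Classical.arbitrary V)⟩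
      exact Nat.card_pos
    -- (H) total cross multiplicity
    have hcomm : ∀ i : Fin 3, crossi i = crossE.filter (· ∈ F0 i) := by
      intro i
      ext e
      simp only [hcrossi, hcrossE, Finset.mem_filter]
      constructor
      · rintro ⟨h1, h2⟩; exact ⟨⟨hV0.1 i h1, h2⟩, h1⟩
      · rintro ⟨⟨h1, h2⟩, h3⟩; exact ⟨h3, h2⟩
    have hmult : ∀ e ∈ crossE, #(Finset.univ.filter (fun i => e ∈ F0 i)) = 2 := by
      intro e he
      rw [hcrossE, Finset.mem_filter] at he
      obtain ⟨heG, hecross⟩ := he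
      have heD : e ∉ D := fun h => hecross (mem_D_isdiag h)
      have hnu : ¬ Unused F0 e := by
        intro hU
        exact heD (Finset.mem_filter.2 ⟨heG, F0, Relation.ReflTransGen.refl, hU⟩)
      rw [Unused] at hnu
      push_neg at hnu
      obtain ⟨j, k, hj, hk, hjk⟩ := hnu
      have hge : 2 ≤ #(Finset.univ.filter (fun i => e ∈ F0 i)) := by
        have hsub : ({j, k} : Finset (Fin 3)) ⊆ Finset.univ.filter (fun i => e ∈ F0 i) := by
          intro l hl
          rcases Finset.mem_insert.1 hl with rfl | hl'
          · exact Finset.mem_filter.2 ⟨Finset.mem_univ _, hj⟩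
          · rw [Finset.mem_singleton.1 hl']
            exact Finset.mem_filter.2 ⟨Finset.mem_univ _, hk⟩
        calc 2 = #({j, k} : Finset (Fin 3)) := (Finset.card_pair hjk).symm
          _ ≤ _ := Finset.card_le_card hsub
      have hle : #(Finset.univ.filter (fun i => e ∈ F0 i)) ≤ 3 := by
        calc #(Finset.univ.filter (fun i => e ∈ F0 i)) ≤ #(Finset.univ : Finset (Fin 3)) :=
              Finset.card_le_card (Finset.filter_subset _ _)
          _ = 3 := by simp
      have hne3 : #(Finset.univ.filter (fun i => e ∈ F0 i)) ≠ 3 := by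
        intro h3
        have huniv : Finset.univ.filter (fun i => e ∈ F0 i) = (Finset.univ : Finset (Fin 3)) :=
          Finset.eq_univ_of_card _ (by simpa using h3)
        apply hV0.2.2 e
        intro l
        have hl : l ∈ Finset.univ.filter (fun i => e ∈ F0 i) := by
          rw [huniv]; exact Finset.mem_univ l
        exact (Finset.mem_filter.1 hl).2
      omega
    have hH : ∑ i : Fin 3, #(crossi i) = 2 * #crossE := by
      calc ∑ i : Fin 3, #(crossi i)
          = ∑ i : Fin 3, ∑ e ∈ crossE, (if e ∈ F0 i then 1 else 0) := by
            refine Finset.sum_congr rfl (fun i _ => ?_)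
            rw [hcomm i, Finset.card_filter]
        _ = ∑ e ∈ crossE, ∑ i : Fin 3, (if e ∈ F0 i then 1 else 0) := Finset.sum_comm
        _ = ∑ e ∈ crossE, #(Finset.univ.filter (fun i => e ∈ F0 i)) := by
            refine Finset.sum_congr rfl (fun e _ => ?_)
            rw [Finset.card_filter]
        _ = ∑ _e ∈ crossE, 2 := Finset.sum_congr rfl hmult
        _ = 2 * #crossE := by rw [Finset.sum_const, smul_eq_mul, mul_comm]
    -- (I) cut bound
    haveI : Fintype (sg D).ConnectedComponent := Fintype.ofFinite _
    have hqf : q = Fintype.card (sg D).ConnectedComponent := Nat.card_eq_fintype_card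
    set pc := fun (c : (sg D).ConnectedComponent) (e : Sym2 V) =>
      cP e ∧ c ∈ Sym2.map cF e with hpc
    have hdelta : ∀ c, 3 ≤ #(G.edgeFinset.filter (pc c)) := by
      intro c
      obtain ⟨x, hx⟩ := c.exists_rep
      set U := Finset.univ.filter (fun v => cF v = c) with hU
      have hxU : x ∈ U := Finset.mem_filter.2 ⟨Finset.mem_univ _, hx⟩
      obtain ⟨c', hc'⟩ := exists_ne c
      obtain ⟨y, hy⟩ := c'.exists_rep
      have hyU : y ∉ U := by
        intro h
        exact hc' (by rw [← hy, ← (Finset.mem_filter.1 h).2]; rfl)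
      have hUproper : U ≠ Finset.univ := by
        intro h
        exact hyU (h ▸ Finset.mem_univ y)
      have h3 := hcut U ⟨x, hxU⟩ hUproper
      refine le_trans h3 (Finset.card_le_card ?_)
      intro e he
      rw [Finset.mem_filter] at he ⊢
      obtain ⟨heG, a, b, rfl, haU, hbU⟩ := he
      have hcFa : cF a = c := (Finset.mem_filter.1 haU).2
      have hcFb : cF b ≠ c := fun h => hbU (Finset.mem_filter.2 ⟨Finset.mem_univ _, h⟩)
      refine ⟨heG, ?_, ?_⟩
      · show ¬ (Sym2.map cF s(a,b)).IsDiag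
        rw [Sym2.map_pair_eq, Sym2.mk_isDiag_iff]
        intro h
        exact hcFb (h ▸ hcFa)
      · rw [Sym2.map_pair_eq, Sym2.mem_iff]
        exact Or.inl hcFa.symm
    have hsumdelta : ∑ c, #(G.edgeFinset.filter (pc c)) = 2 * #crossE := by
      calc ∑ c, #(G.edgeFinset.filter (pc c))
          = ∑ c, ∑ e ∈ G.edgeFinset, (if pc c e then 1 else 0) := by
            refine Finset.sum_congr rfl (fun c _ => ?_)
            rw [Finset.card_filter]
        _ = ∑ e ∈ G.edgeFinset, ∑ c, (if pc c e then 1 else 0) := Finset.sum_comm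
        _ = ∑ e ∈ G.edgeFinset, (if cP e then 2 else 0) := by
            refine Finset.sum_congr rfl (fun e heG => ?_)
            rw [← Finset.card_filter]
            by_cases hcp : cP e
            · rw [if_pos hcp]
              induction e using Sym2.ind with
              | _ a b =>
                have hab : cF a ≠ cF b := by
                  simp only [hcP, Sym2.map_pair_eq, Sym2.mk_isDiag_iff] at hcp
                  exact hcp
                have : Finset.univ.filter (fun c => pc c s(a,b)) = {cF a, cF b} := by
                  ext c
                  simp only [Finset.mem_filter, Finset.mem_univ, true_and, hpc,
                    Sym2.map_pair_eq, Sym2.mem_iff, Finset.mem_insert, Finset.mem_singleton]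
                  constructor
                  · rintro ⟨_, h | h⟩
                    · exact Or.inl h
                    · exact Or.inr h
                  · rintro (rfl | rfl)
                    · exact ⟨hcp, Or.inl rfl⟩
                    · exact ⟨hcp, Or.inr rfl⟩
                rw [this, Finset.card_pair hab]
            · rw [if_neg hcp]
              have : Finset.univ.filter (fun c => pc c e) = ∅ := by
                apply Finset.filter_false_of_mem
                intro c _
                exact fun h => hcp h.1
              rw [this, Finset.card_empty]
        _ = ∑ e ∈ crossE, 2 := by
            rw [hcrossE, Finset.sum_filter]
        _ = 2 * #crossE := by rw [Finset.sum_const, smul_eq_mul, mul_comm]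
    have hI : 3 * q ≤ 2 * #crossE := by
      calc 3 * q = ∑ _c : (sg D).ConnectedComponent, 3 := by
            rw [Finset.sum_const, smul_eq_mul, Finset.card_univ, ← hqf, mul_comm]
        _ ≤ ∑ c, #(G.edgeFinset.filter (pc c)) := Finset.sum_le_sum (fun c _ => hdelta c)
        _ = 2 * #crossE := hsumdelta
    -- final contradiction
    have hsum3 : #(crossi 0) + #(crossi 1) + #(crossi 2) = 2 * #crossE := by
      rw [← hH, Fin.sum_univ_three]
    have h0 := hFc 0
    have h1 := hFc 1
    have h2 := hFc 2
    have g0 := hGc 0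
    have g1 := hGc 1
    have g2 := hGc 2
    omega

end Main

end Stmt11Aux

/-- In a finite 3-edge-connected simple graph (connected, and still connected after
deleting any two edges) there are three spanning trees `T₁, T₂, T₃` whose complements
cover all edges; equivalently, their edge sets have empty intersection. -/
theorem stmt11 {V : Type*} [Fintype V] [DecidableEq V] (G : SimpleGraph V)
    (hconn : G.Connected)
    (h3ec : ∀ e ∈ G.edgeSet, ∀ f ∈ G.edgeSet, (G.deleteEdges {e, f}).Connected) :
    ∃ T₁ T₂ T₃ : SimpleGraph V,
      T₁ ≤ G ∧ T₂ ≤ G ∧ T₃ ≤ G ∧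
      T₁.IsTree ∧ T₂.IsTree ∧ T₃.IsTree ∧
      T₁.edgeSet ∩ T₂.edgeSet ∩ T₃.edgeSet = ∅ := by
  classical
  have hcut : ∀ U : Finset V, U.Nonempty → U ≠ Finset.univ →
      3 ≤ #(G.edgeFinset.filter (fun e => ∃ a b, e = s(a,b) ∧ a ∈ U ∧ b ∉ U)) := by
    intro U hUne hUproper
    by_contra hlt
    push_neg at hlt
    set C := G.edgeFinset.filter (fun e => ∃ a b, e = s(a,b) ∧ a ∈ U ∧ b ∉ U) with hC
    obtain ⟨u, hu⟩ := hUne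
    obtain ⟨v, hv⟩ : ∃ v, v ∉ U := by
      by_contra h
      push_neg at h
      exact hUproper (Finset.eq_univ_iff_forall.2 h)
    obtain ⟨w⟩ := hconn.preconnected u v
    obtain ⟨a, b, hadj, haU, hbU⟩ := Stmt11Aux.walk_cross w (↑U : Set V)
      (by exact_mod_cast hu) (by exact_mod_cast hv)
    have habC : s(a,b) ∈ C := by
      rw [hC, Finset.mem_filter]
      exact ⟨SimpleGraph.mem_edgeFinset.2 ((SimpleGraph.mem_edgeSet G).2 hadj),
        a, b, rfl, (by exact_mod_cast haU), (by exact_mod_cast hbU)⟩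
    have hCcard : #C ≤ 2 := by omega
    have heE : s(a,b) ∈ G.edgeSet := (SimpleGraph.mem_edgeSet G).2 hadj
    set e := s(a,b) with he_def
    have hmain : ∃ f ∈ G.edgeSet, ∀ x ∈ C, x = e ∨ x = f := by
      by_cases hex : ∃ f ∈ C, f ≠ e
      · obtain ⟨f, hfC, hfe⟩ := hex
        refine ⟨f, SimpleGraph.mem_edgeFinset.1 (Finset.mem_filter.1 hfC).1, ?_⟩
        intro x hx
        by_contra hcontra
        push_neg at hcontra
        obtain ⟨hxe, hxf⟩ := hcontra
        have hef : e ≠ f := fun h => hfe h.symm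
        have hsub : ({x, e, f} : Finset (Sym2 V)) ⊆ C := by
          intro y hy
          rcases Finset.mem_insert.1 hy with rfl | hy'
          · exact hx
          rcases Finset.mem_insert.1 hy' with rfl | hy''
          · exact habC
          · rw [Finset.mem_singleton.1 hy'']
            exact hfC
        have hnx : x ∉ ({e, f} : Finset (Sym2 V)) := by
          intro hmem
          rcases Finset.mem_insert.1 hmem with h | h
          · exact hxe h
          · exact hxf (Finset.mem_singleton.1 h)
        have hcard3 : #({x, e, f} : Finset (Sym2 V)) = 3 := by
          rw [Finset.card_insert_of_notMem hnx, Finset.card_pair hef]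
        have := Finset.card_le_card hsub
        omega
      · push_neg at hex
        exact ⟨e, heE, fun x hx => Or.inl (hex x hx)⟩
    obtain ⟨f, hfE, hcov⟩ := hmain
    have hconn' := h3ec e heE f hfE
    obtain ⟨w'⟩ := hconn'.preconnected u v
    obtain ⟨a', b', hadj', ha', hb'⟩ := Stmt11Aux.walk_cross w' (↑U : Set V)
      (by exact_mod_cast hu) (by exact_mod_cast hv)
    rw [SimpleGraph.deleteEdges_adj] at hadj'
    apply hadj'.2
    have hmem : s(a',b') ∈ C := by
      rw [hC, Finset.mem_filter]
      exact ⟨SimpleGraph.mem_edgeFinset.2 ((SimpleGraph.mem_edgeSet G).2 hadj'.1),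
        a', b', rfl, (by exact_mod_cast ha'), (by exact_mod_cast hb')⟩
    rcases hcov _ hmem with h | h
    · rw [h]; exact Set.mem_insert _ _
    · rw [h]; exact Set.mem_insert_of_mem _ rfl
  obtain ⟨F, hVF, hFconn⟩ := Stmt11Aux.three_trees G hconn hcut
  have hsgle : ∀ i : Fin 3, Stmt11Aux.sg (F i) ≤ G := by
    intro i
    have h1 : (↑(F i) : Set (Sym2 V)) ⊆ G.edgeSet := by
      intro x hx
      exact SimpleGraph.mem_edgeFinset.1 (hVF.1 i (by exact_mod_cast hx))
    calc Stmt11Aux.sg (F i) = SimpleGraph.fromEdgeSet ↑(F i) := rfl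
      _ ≤ SimpleGraph.fromEdgeSet G.edgeSet := SimpleGraph.fromEdgeSet_mono h1
      _ = G := SimpleGraph.fromEdgeSet_edgeSet G
  refine ⟨Stmt11Aux.sg (F 0), Stmt11Aux.sg (F 1), Stmt11Aux.sg (F 2),
    hsgle 0, hsgle 1, hsgle 2, ⟨hFconn 0, hVF.2.1 0⟩, ⟨hFconn 1, hVF.2.1 1⟩,
    ⟨hFconn 2, hVF.2.1 2⟩, ?_⟩
  rw [Set.eq_empty_iff_forall_notMem]
  rintro x ⟨⟨h0, h1⟩, h2⟩
  apply hVF.2.2 x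
  have m0 : x ∈ F 0 := Stmt11Aux.mem_of_sg_edge h0
  have m1 : x ∈ F 1 := Stmt11Aux.mem_of_sg_edge h1
  have m2 : x ∈ F 2 := Stmt11Aux.mem_of_sg_edge h2
  intro i
  fin_cases i <;> assumption
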